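/- Let val : ℕ → Bool be the valency along a solo run of process p_1 from a 1-valent configuration C to a deciding configuration D_1, and suppose each configuration Z_i in the run has an associated configuration Z'_i (the result of applying a fixed enabled step e of process p_0) which is univalent, with Z'_0 being 0-valent and Z'_k being 1-valent. Then there exists s < k such that Z'_s is 0-valent while Z_s, Z_{s+1}, and Z'_{s+1} are all 1-valent. -/
import Mathlib

/-- Along a solo run `Z_0, ..., Z_k` of 1-valent configurations (valency `val i = true`
for all `i ≤ k`), whose associated configurations `Z'_i` (result of applying a fixed
enabled step of `p_0`) are univalent with `Z'_0` 0-valent (`val' 0 = false`) and `Z'_k`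
1-valent (`val' k = true`), there is an index `s < k` with `Z'_s` 0-valent while `Z_s`,
`Z_{s+1}` and `Z'_{s+1}` are all 1-valent. -/
theorem exists_critical_index (k : ℕ) (val val' : ℕ → Bool)
    (hval : ∀ i ≤ k, val i = true)
    (h0 : val' 0 = false) (hk : val' k = true) :
    ∃ s < k, val' s = false ∧ val s = true ∧ val (s + 1) = true ∧ val' (s + 1) = true := by
  classical
  have hex : ∃ t, val' t = true := ⟨k, hk⟩
  have htk : Nat.find hex ≤ k := Nat.find_le hk
  have htt : val' (Nat.find hex) = true := Nat.find_spec hex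
  have ht0 : Nat.find hex ≠ 0 := fun h => by simp [h, h0] at htt
  obtain ⟨s, hs⟩ := Nat.exists_eq_succ_of_ne_zero ht0
  rw [hs] at htk htt
  refine ⟨s, by omega, ?_, hval s (by omega), hval (s+1) htk, htt⟩
  have := Nat.find_min hex (m := s) (by omega)
  simpa using this
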